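/- Let X = {x_1, …, x_M} be a set of M ≥ 2 distinct points in ℝ^d. Suppose z ∈ B(μ(X), α·A(X)) for some 0 < α < 1 and z ∉ X. Let x_k be a point of X farthest from (z+Σ(X))/(M+1). Then F(X) − F({z} ∪ (X \ {x_k})) ≥ (1−α)·((M−1)α + M + 1)·A(X)² > ((1−α)/M)·F(X). Here B(c,ρ) denotes the open Euclidean ball of radius ρ centered at c. -/

import Mathlib

open Finset Metric MeasureTheory
open scoped BigOperators ENNReal RealInnerProductSpace

noncomputable section

instance {d : ℕ} : DecidableEq (EuclideanSpace ℝ (Fin d)) := Classical.decEq _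

/-- `E d` is the Euclidean space `ℝ^d`. -/
abbrev E (d : ℕ) : Type := EuclideanSpace ℝ (Fin d)

/-- `Σ(X)`, the sum of the points of `X`. -/
def csum {d : ℕ} (X : Finset (E d)) : E d := ∑ x ∈ X, x

/-- `μ(X)`, the center of mass of `X`. -/
def cm {d : ℕ} (X : Finset (E d)) : E d := (X.card : ℝ)⁻¹ • csum X

/-- `F(X) = Σ_{i<j} ‖x_i - x_j‖²`, the moment of inertia of `X`. -/
def inertia {d : ℕ} (X : Finset (E d)) : ℝ := (∑ x ∈ X, ∑ y ∈ X, ‖x - y‖ ^ 2) / 2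

/-- `A(X) = max_{w ∈ X} ‖w - μ(X)‖`. -/
def Amax {d : ℕ} (X : Finset (E d)) : ℝ := sSup ((fun w => ‖w - cm X‖) '' (X : Set (E d)))

/-- `D(X) = max_{i ≠ j} ‖x_i - x_j‖`. -/
def Dmax {d : ℕ} (X : Finset (E d)) : ℝ :=
  sSup {r : ℝ | ∃ x ∈ X, ∃ y ∈ X, x ≠ y ∧ r = ‖x - y‖}

/-- `d(X) = min_{i ≠ j} ‖x_i - x_j‖`. -/
def dmin {d : ℕ} (X : Finset (E d)) : ℝ :=
  sInf {r : ℝ | ∃ x ∈ X, ∃ y ∈ X, x ≠ y ∧ r = ‖x - y‖}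

/-- `Keep(X;B) = { x ∈ B : ‖x - μ({x} ∪ X)‖ < max_{s ∈ X} ‖s - μ({x} ∪ X)‖ }`. -/
def Keep {d : ℕ} (X : Finset (E d)) (B : Set (E d)) : Set (E d) :=
  {x ∈ B | ‖x - cm (insert x X)‖ <
    sSup ((fun s => ‖s - cm (insert x X)‖) '' (X : Set (E d)))}

/-- `V(k)`, the Lebesgue measure of the unit ball in `ℝ^k` (so `V 0 = 1`). -/
def ubVol (k : ℕ) : ℝ := (volume (Metric.ball (0 : EuclideanSpace ℝ (Fin k)) 1)).toReal

lemma inertia_eq {d : ℕ} (S : Finset (E d)) (p : E d) :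
    inertia S = (S.card : ℝ) * ∑ x ∈ S, ‖x - p‖ ^ 2 - ‖∑ x ∈ S, (x - p)‖ ^ 2 := by
  have key : ∀ x y : E d, ‖x - y‖ ^ 2
      = ‖x - p‖ ^ 2 + ‖y - p‖ ^ 2 - 2 * ⟪x - p, y - p⟫ := by
    intro x y
    have h1 : x - y = (x - p) - (y - p) := by abel
    rw [h1, norm_sub_sq_real]; ring
  have h2 : ∑ x ∈ S, ∑ y ∈ S, ⟪x - p, y - p⟫ = ‖∑ x ∈ S, (x - p)‖ ^ 2 := by
    simp_rw [← inner_sum, ← sum_inner, real_inner_self_eq_norm_sq]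
  have e1 : ∑ x ∈ S, ∑ _y ∈ S, ‖x - p‖ ^ 2 = (S.card : ℝ) * ∑ x ∈ S, ‖x - p‖ ^ 2 := by
    simp [Finset.sum_const, nsmul_eq_mul, ← Finset.mul_sum]
  have e2 : ∑ _x ∈ S, ∑ y ∈ S, ‖y - p‖ ^ 2 = (S.card : ℝ) * ∑ y ∈ S, ‖y - p‖ ^ 2 := by
    simp [Finset.sum_const, nsmul_eq_mul]
  have expand : ∑ x ∈ S, ∑ y ∈ S, ‖x - y‖ ^ 2 =
      2 * (S.card : ℝ) * ∑ x ∈ S, ‖x - p‖ ^ 2 - 2 * ‖∑ x ∈ S, (x - p)‖ ^ 2 := by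
    calc ∑ x ∈ S, ∑ y ∈ S, ‖x - y‖ ^ 2
        = ∑ x ∈ S, ∑ y ∈ S, (‖x - p‖ ^ 2 + ‖y - p‖ ^ 2 - 2 * ⟪x - p, y - p⟫) :=
          Finset.sum_congr rfl fun x _ => Finset.sum_congr rfl fun y _ => key x y
      _ = (∑ x ∈ S, ∑ _y ∈ S, ‖x - p‖ ^ 2) + (∑ _x ∈ S, ∑ y ∈ S, ‖y - p‖ ^ 2)
            - 2 * ∑ x ∈ S, ∑ y ∈ S, ⟪x - p, y - p⟫ := by
          simp [Finset.sum_add_distrib, Finset.sum_sub_distrib, Finset.mul_sum]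
      _ = 2 * (S.card : ℝ) * ∑ x ∈ S, ‖x - p‖ ^ 2 - 2 * ‖∑ x ∈ S, (x - p)‖ ^ 2 := by
          rw [e1, e2, h2]; ring
  unfold inertia
  rw [expand]; ring

set_option maxHeartbeats 4000000 in
/-- Lemma 7 of the paper: if the new point `z` lies in `B(μ(X), α·A(X))` with
`0 < α < 1`, then replacing a farthest point `x_k` from `(z+Σ(X))/(M+1)`
decreases the moment of inertia by at least
`(1-α)·((M-1)α + M+1)·A(X)² > ((1-α)/M)·F(X)`. -/
theorem stmt_7 (d : ℕ) (X : Finset (E d)) (hX : 2 ≤ X.card)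
    (α : ℝ) (hα0 : 0 < α) (hα1 : α < 1)
    (z : E d) (hz : z ∉ X) (hzball : z ∈ Metric.ball (cm X) (α * Amax X))
    (xk : E d) (hxk : xk ∈ X)
    (hmax : ∀ x ∈ X, ‖x - ((X.card : ℝ) + 1)⁻¹ • (z + csum X)‖ ≤
      ‖xk - ((X.card : ℝ) + 1)⁻¹ • (z + csum X)‖) :
    (1 - α) * (((X.card : ℝ) - 1) * α + (X.card : ℝ) + 1) * Amax X ^ 2 ≤
        inertia X - inertia (insert z (X.erase xk)) ∧
    ((1 - α) / (X.card : ℝ)) * inertia X <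
        (1 - α) * (((X.card : ℝ) - 1) * α + (X.card : ℝ) + 1) * Amax X ^ 2 := by
  set M : ℝ := (X.card : ℝ) with hMdef
  have hM2 : (2:ℝ) ≤ M := by rw [hMdef]; exact_mod_cast hX
  have hM0 : (0:ℝ) < M := by linarith
  have hMne : M ≠ 0 := hM0.ne'
  have hM1 : (0:ℝ) < M + 1 := by linarith
  have hM1ne : M + 1 ≠ 0 := hM1.ne'
  set c : E d := (M + 1)⁻¹ • (z + csum X) with hcdef
  set A : ℝ := Amax X with hAdef
  set μ : E d := cm X with hμdef
  -- Amax facts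
  have hfin : ((fun w => ‖w - μ‖) '' (X : Set (E d))).Finite := X.finite_toSet.image _
  have hXne : (X : Set (E d)).Nonempty := by
    rcases Finset.card_pos.mp (lt_of_lt_of_le (by norm_num) hX) with ⟨x, hx⟩
    exact ⟨x, hx⟩
  have hle : ∀ x ∈ X, ‖x - μ‖ ≤ A := fun x hx =>
    le_csSup hfin.bddAbove ⟨x, hx, rfl⟩
  obtain ⟨w, hwX, hwA⟩ : ∃ w ∈ X, ‖w - μ‖ = A := by
    have := (hXne.image _).csSup_mem hfin
    rcases this with ⟨w, hw, hw2⟩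
    exact ⟨w, hw, hw2⟩
  have hA0 : 0 < A := by
    rcases Finset.one_lt_card.mp (lt_of_lt_of_le (by norm_num) hX) with ⟨u, hu, v, hv, huv⟩
    by_contra h
    push_neg at h
    have h1 : u - μ = 0 := by
      have := hle u hu
      have : ‖u - μ‖ = 0 := le_antisymm (this.trans h) (norm_nonneg _)
      simpa using this
    have h2 : v - μ = 0 := by
      have := hle v hv
      have : ‖v - μ‖ = 0 := le_antisymm (this.trans h) (norm_nonneg _)
      simpa using this
    exact huv (by rw [← sub_eq_zero]; rw [sub_eq_zero] at h1 h2; rw [h1, h2, sub_self])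
  set b : ℝ := ‖z - μ‖ with hbdef
  have hb : b < α * A := by
    have := mem_ball.mp hzball
    rwa [dist_eq_norm] at this
  have hb0 : 0 ≤ b := norm_nonneg _
  have hbαA : b ≤ α * A := hb.le
  -- vector identities
  have hS : csum X = M • μ := by
    rw [hμdef, cm, ← hMdef, smul_inv_smul₀ hMne]
  have hsumXc : ∑ x ∈ X, (x - c) = c - z := by
    rw [Finset.sum_sub_distrib, Finset.sum_const, ← csum, ← Nat.cast_smul_eq_nsmul ℝ,
      ← hMdef, hS, hcdef, hS]
    match_scalars <;> field_simp <;> ring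
  have hzc : z - c = (M * (M + 1)⁻¹) • (z - μ) := by
    rw [hcdef, hS]
    match_scalars <;> field_simp <;> ring
  have hcμ : c - μ = (M + 1)⁻¹ • (z - μ) := by
    rw [hcdef, hS]
    match_scalars <;> field_simp <;> ring
  -- Y facts
  set Y : Finset (E d) := insert z (X.erase xk) with hYdef
  have hzY : z ∉ X.erase xk := fun h => hz (Finset.mem_of_mem_erase h)
  have hcardY : (Y.card : ℝ) = M := by
    rw [hYdef, Finset.card_insert_of_notMem hzY, Finset.card_erase_of_mem hxk, hMdef]
    have : 1 ≤ X.card := by omega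
    push_cast [this]
    ring
  have hsumY : ∑ y ∈ Y, (y - c) = c - xk := by
    rw [hYdef, Finset.sum_insert hzY, Finset.sum_erase_eq_sub hxk, hsumXc]
    abel
  have hsumsqY : ∑ y ∈ Y, ‖y - c‖ ^ 2 =
      ∑ x ∈ X, ‖x - c‖ ^ 2 + ‖z - c‖ ^ 2 - ‖xk - c‖ ^ 2 := by
    rw [hYdef, Finset.sum_insert hzY, Finset.sum_erase_eq_sub hxk]
    ring
  set r : ℝ := ‖xk - c‖ with hrdef
  set s : ℝ := ‖z - c‖ with hsdef
  have hr0 : 0 ≤ r := norm_nonneg _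
  have hs0 : 0 ≤ s := norm_nonneg _
  have hdiff : inertia X - inertia Y = (M + 1) * (r ^ 2 - s ^ 2) := by
    rw [inertia_eq X c, inertia_eq Y c, hcardY, ← hMdef, hsumsqY, hsumXc, hsumY,
      norm_sub_rev c z, norm_sub_rev c xk, ← hsdef, ← hrdef]
    ring
  -- bounds
  have hcμn : ‖c - μ‖ = (M + 1)⁻¹ * b := by
    rw [hcμ, norm_smul, hbdef, Real.norm_eq_abs, abs_of_pos (by positivity)]
  have hsn : s = M * (M + 1)⁻¹ * b := by
    rw [hsdef, hzc, norm_smul, hbdef, Real.norm_eq_abs, abs_of_pos (by positivity)]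
  have hrA : A ≤ r + (M + 1)⁻¹ * b := by
    have h1 : ‖w - c‖ ≤ r := hmax w hwX
    have h2 : ‖w - μ‖ ≤ ‖w - c‖ + ‖c - μ‖ := by
      have : w - μ = (w - c) + (c - μ) := by abel
      rw [this]; exact norm_add_le _ _
    rw [hwA, hcμn] at h2
    linarith
  clear_value M c A μ Y b r s
  have hinv : (M + 1) * (M + 1)⁻¹ = 1 := mul_inv_cancel₀ hM1ne
  have hr' : (M + 1) * A - b ≤ (M + 1) * r := by
    have h := mul_le_mul_of_nonneg_left hrA hM1.le
    nlinarith [hinv]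
  have hs' : (M + 1) * s = M * b := by
    rw [hsn]; field_simp
  -- key chain
  have hApos : 0 ≤ (M + 1) * A - b := by nlinarith
  have k1 : ((M + 1) * A - b) ^ 2 - (M * b) ^ 2 ≤ ((M + 1) * r) ^ 2 - ((M + 1) * s) ^ 2 := by
    have hsq : ((M + 1) * A - b) ^ 2 ≤ ((M + 1) * r) ^ 2 := by
      have : 0 ≤ (M + 1) * r := by positivity
      nlinarith
    rw [hs']
    linarith
  have k2 : (M + 1) * ((1 - α) * ((M - 1) * α + M + 1) * A ^ 2) ≤
      ((M + 1) * A - b) ^ 2 - (M * b) ^ 2 := by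
    have hprod : 0 ≤ (α * A - b) * (2 * (M + 1) * A + (M ^ 2 - 1) * (α * A + b)) := by
      apply mul_nonneg (by linarith)
      have : (0:ℝ) ≤ M ^ 2 - 1 := by nlinarith
      nlinarith
    nlinarith [hprod]
  have main1 : (1 - α) * ((M - 1) * α + M + 1) * A ^ 2 ≤ inertia X - inertia Y := by
    rw [hdiff]
    have k3 : (M + 1) * ((1 - α) * ((M - 1) * α + M + 1) * A ^ 2) ≤
        (M + 1) * ((M + 1) * (r ^ 2 - s ^ 2)) := by
      have e : (M + 1) * ((M + 1) * (r ^ 2 - s ^ 2)) = ((M + 1) * r) ^ 2 - ((M + 1) * s) ^ 2 := by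
        ring
      rw [e]
      exact k2.trans k1
    exact le_of_mul_le_mul_left k3 hM1
  -- second part
  have hsum0 : ∑ x ∈ X, (x - μ) = 0 := by
    rw [Finset.sum_sub_distrib, Finset.sum_const, ← csum, ← Nat.cast_smul_eq_nsmul ℝ,
      ← hMdef, hS, sub_self]
  have hIX : inertia X = M * ∑ x ∈ X, ‖x - μ‖ ^ 2 := by
    rw [inertia_eq X μ, hsum0, ← hMdef]
    simp
  have hsumle : ∑ x ∈ X, ‖x - μ‖ ^ 2 ≤ M * A ^ 2 := by
    calc ∑ x ∈ X, ‖x - μ‖ ^ 2 ≤ ∑ _x ∈ X, A ^ 2 :=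
          Finset.sum_le_sum fun x hx => pow_le_pow_left₀ (norm_nonneg _) (hle x hx) 2
      _ = M * A ^ 2 := by
          rw [Finset.sum_const, nsmul_eq_mul, hMdef]
  have hIle : inertia X ≤ M ^ 2 * A ^ 2 := by
    rw [hIX]
    calc M * ∑ x ∈ X, ‖x - μ‖ ^ 2 ≤ M * (M * A ^ 2) :=
          mul_le_mul_of_nonneg_left hsumle hM0.le
      _ = M ^ 2 * A ^ 2 := by ring
  have main2 : ((1 - α) / M) * inertia X <
      (1 - α) * ((M - 1) * α + M + 1) * A ^ 2 := by
    have hc0 : 0 ≤ (1 - α) / M := div_nonneg (by linarith) hM0.le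
    have h1 : ((1 - α) / M) * inertia X ≤ ((1 - α) / M) * (M ^ 2 * A ^ 2) :=
      mul_le_mul_of_nonneg_left hIle hc0
    have h2 : ((1 - α) / M) * (M ^ 2 * A ^ 2) = (1 - α) * M * A ^ 2 := by
      field_simp
    have h3 : (1 - α) * M * A ^ 2 < (1 - α) * ((M - 1) * α + M + 1) * A ^ 2 := by
      have hp : 0 < (1 - α) * A ^ 2 * ((M - 1) * α + 1) := by
        apply mul_pos (mul_pos (by linarith) (pow_pos hA0 2))
        nlinarith
      nlinarith
    linarith
  exact ⟨main1, main2⟩
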